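/- arXiv:1304.1075 — 9 statements merged into one kernel-verified Lean document; each statement's English description precedes it below -/
import Mathlib

section
/- A set system F containing ∅ and N is an augmenting system (weakly union-closed and satisfying the augmentation property between nested feasible sets) if and only if F is a regular set system and weakly union-closed. -/
open Finset

variable {α : Type*}

/-- `T` covers `S` in the set system `F`. -/
def Covers [Fintype α] [DecidableEq α] (F : Finset (Finset α)) (S T : Finset α) : Prop :=
  S ∈ F ∧ T ∈ F ∧ S ⊂ T ∧ ∀ U ∈ F, S ⊂ U → ¬ U ⊂ T

/-- A maximal chain of length `k` from `A` to `B` in the set system `F`: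
each step is a covering step in `F`. -/
def IsMaxChainIn [Fintype α] [DecidableEq α] (F : Finset (Finset α)) (A B : Finset α) (k : ℕ)
    (c : Fin (k + 1) → Finset α) : Prop :=
  c 0 = A ∧ c (Fin.last k) = B ∧ ∀ i : Fin k, Covers F (c i.castSucc) (c i.succ)

/-- A set system is regular if all maximal chains from `∅` to `N` have length `n`. -/
def RegularSystem [Fintype α] [DecidableEq α] (F : Finset (Finset α)) : Prop :=
  ∀ (k : ℕ) (c : Fin (k + 1) → Finset α),
    IsMaxChainIn F ∅ Finset.univ k c → k = Fintype.card α

section Aux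

variable [Fintype α] [DecidableEq α]

/-- Under augmentation, every cover step increases cardinality by exactly one. -/
lemma covers_card_aug {F : Finset (Finset α)}
    (haug : ∀ S ∈ F, ∀ T ∈ F, S ⊂ T → ∃ i ∈ T \ S, insert i S ∈ F)
    {S T : Finset α} (h : Covers F S T) : T.card = S.card + 1 := by
  obtain ⟨hS, hT, hST, hmax⟩ := h
  obtain ⟨i, hi, hins⟩ := haug S hS T hT hST
  simp only [mem_sdiff] at hi
  have hsub : insert i S ⊆ T := insert_subset hi.1 hST.subset
  have hne : S ⊂ insert i S := ssubset_insert hi.2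
  have heq : insert i S = T := by
    by_contra hne2
    exact hmax _ hins hne (lt_of_le_of_ne hsub hne2)
  rw [← heq, card_insert_of_notMem hi.2]

/-- There is a maximal chain (of cover steps) from `∅` up to any `A ∈ F`. -/
lemma chain_down {F : Finset (Finset α)} (hempty : ∅ ∈ F) :
    ∀ A : Finset α, A ∈ F → ∃ m, ∃ d : Fin (m + 1) → Finset α, d 0 = ∅ ∧
      d (Fin.last m) = A ∧ (∀ i : Fin m, Covers F (d i.castSucc) (d i.succ)) ∧ m ≤ A.card := by
  intro A
  induction A using Finset.strongInduction with
  | _ A ih =>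
    intro hA
    by_cases hAe : A = ∅
    · subst hAe
      exact ⟨0, fun _ => ∅, rfl, rfl, fun i => i.elim0, by simp⟩
    · have hne : (F.filter (· ⊂ A)).Nonempty :=
        ⟨∅, mem_filter.mpr ⟨hempty, (nonempty_iff_ne_empty.mpr hAe).empty_ssubset⟩⟩
      obtain ⟨V, hVs, hVmax⟩ : ∃ V ∈ F.filter (· ⊂ A), ∀ x ∈ F.filter (· ⊂ A), ¬ V < x := by
        obtain ⟨V, hV⟩ := Finset.exists_maximal hne
        exact ⟨V, hV.1, fun x hx hlt => hlt.not_ge (hV.2 hx hlt.le)⟩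
      rw [mem_filter] at hVs
      obtain ⟨hV, hVA⟩ := hVs
      obtain ⟨m', d', h0, hl, hc, hm⟩ := ih V hVA hV
      refine ⟨m' + 1, Fin.snoc d' A, ?_, ?_, ?_, ?_⟩
      · have : (0 : Fin (m' + 2)) = Fin.castSucc 0 := rfl
        rw [this, Fin.snoc_castSucc]; exact h0
      · exact Fin.snoc_last _ _
      · intro i
        induction i using Fin.lastCases with
        | last =>
          rw [Fin.succ_last, Fin.snoc_last, Fin.snoc_castSucc, hl]
          exact ⟨hV, hA, hVA, fun W hW hVW hWA =>
            hVmax W (mem_filter.mpr ⟨hW, hWA⟩) hVW⟩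
        | cast j =>
          rw [Fin.succ_castSucc, Fin.snoc_castSucc, Fin.snoc_castSucc]
          exact hc j
      · exact Nat.succ_le_of_lt (lt_of_le_of_lt hm (card_lt_card hVA))

/-- There is a maximal chain (of cover steps) from any `A ∈ F` up to `univ`. -/
lemma chain_up {F : Finset (Finset α)} (huniv : Finset.univ ∈ F) :
    ∀ (b : ℕ) (A : Finset α), A ∈ F → Fintype.card α ≤ A.card + b →
    ∃ p, ∃ u : Fin (p + 1) → Finset α, u 0 = A ∧ u (Fin.last p) = Finset.univ ∧
      (∀ i : Fin p, Covers F (u i.castSucc) (u i.succ)) ∧ p + A.card ≤ Fintype.card α := by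
  intro b
  induction b with
  | zero =>
    intro A hA hcard
    have : A = Finset.univ := Finset.eq_univ_of_card A (le_antisymm (card_le_univ A) (by simpa using hcard))
    subst this
    exact ⟨0, fun _ => Finset.univ, rfl, rfl, fun i => i.elim0, by simp⟩
  | succ b ihb =>
    intro A hA hcard
    by_cases hAu : A = Finset.univ
    · subst hAu
      exact ⟨0, fun _ => Finset.univ, rfl, rfl, fun i => i.elim0, by simp⟩
    · have hne : (F.filter (A ⊂ ·)).Nonempty :=
        ⟨Finset.univ, mem_filter.mpr ⟨huniv, lt_of_le_of_ne (subset_univ A) hAu⟩⟩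
      obtain ⟨U, hUs, hUmin⟩ : ∃ U ∈ F.filter (A ⊂ ·), ∀ x ∈ F.filter (A ⊂ ·), ¬ x < U := by
        obtain ⟨U, hU⟩ := Finset.exists_minimal hne
        exact ⟨U, hU.1, fun x hx hlt => hlt.not_ge (hU.2 hx hlt.le)⟩
      rw [mem_filter] at hUs
      obtain ⟨hU, hAU⟩ := hUs
      have hUcard : A.card + 1 ≤ U.card := card_lt_card hAU
      obtain ⟨p', u', h0, hl, hc, hp⟩ := ihb U hU (by omega)
      refine ⟨p' + 1, Fin.cases A u', ?_, ?_, ?_, by omega⟩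
      · show Fin.cases A u' 0 = A
        exact Fin.cases_zero ..
      · show Fin.cases A u' (Fin.last (p' + 1)) = Finset.univ
        rw [← Fin.succ_last, Fin.cases_succ]; exact hl
      · intro i
        show Covers F (Fin.cases A u' i.castSucc) (Fin.cases A u' i.succ)
        induction i using Fin.cases with
        | zero =>
          rw [Fin.castSucc_zero, show ((0 : Fin (p' + 1)).succ) = Fin.succ 0 from rfl,
            Fin.cases_succ, Fin.cases_zero, h0]
          exact ⟨hA, hU, hAU, fun W hW hAW hWU =>
            hUmin W (mem_filter.mpr ⟨hW, hAW⟩) hWU⟩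
        | succ j =>
          rw [← Fin.succ_castSucc, Fin.cases_succ, Fin.cases_succ]
          exact hc j

/-- Under regularity, every cover step increases cardinality by exactly one. -/
lemma covers_card_reg {F : Finset (Finset α)} (hreg : RegularSystem F)
    (hempty : ∅ ∈ F) (huniv : Finset.univ ∈ F)
    {S T : Finset α} (h : Covers F S T) : T.card = S.card + 1 := by
  obtain ⟨hS, hT, hST, hmax⟩ := h
  obtain ⟨m, d, hd0, hdl, hdc, hm⟩ := chain_down hempty S hS
  obtain ⟨p, u, hu0, hul, huc, hp⟩ := chain_up huniv (Fintype.card α) T hT (by omega)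
  set k := m + 1 + p with hk
  have hdd : ∀ (j : Fin (k + 1)) (hj : j.val ≤ m),
      (fun j : Fin (k+1) => if hj : j.val ≤ m then d ⟨j.val, by omega⟩
        else u ⟨j.val - (m + 1), by omega⟩) j = d ⟨j.val, by omega⟩ := by
    intro j hj; simp only [dif_pos hj]
  have huu : ∀ (j : Fin (k + 1)) (hj : ¬ j.val ≤ m),
      (fun j : Fin (k+1) => if hj : j.val ≤ m then d ⟨j.val, by omega⟩
        else u ⟨j.val - (m + 1), by omega⟩) j = u ⟨j.val - (m + 1), by omega⟩ := by
    intro j hj; simp only [dif_neg hj]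
  set c : Fin (k + 1) → Finset α := fun j =>
    if hj : j.val ≤ m then d ⟨j.val, by omega⟩ else u ⟨j.val - (m + 1), by omega⟩ with hcdef
  have hchain : IsMaxChainIn F ∅ Finset.univ k c := by
    refine ⟨?_, ?_, ?_⟩
    · rw [hcdef, hdd 0 (by simp)]
      have e : (⟨(0 : Fin (k+1)).val, by simp⟩ : Fin (m+1)) = 0 := by
        apply Fin.ext; simp
      rw [e, hd0]
    · rw [hcdef, huu (Fin.last k) (by simp [Fin.last, hk]; omega)]
      have e : (⟨(Fin.last k).val - (m+1), by omega⟩ : Fin (p+1)) = Fin.last p := by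
        apply Fin.ext; simp [Fin.last, hk]
      rw [e, hul]
    · intro i
      have hiv : i.val < k := i.isLt
      have hcs : (i.castSucc).val = i.val := rfl
      have hss : (i.succ).val = i.val + 1 := rfl
      rcases lt_trichotomy i.val m with hlt | heq | hgt
      · have e1 : c i.castSucc = d ((⟨i.val, hlt⟩ : Fin m).castSucc) := by
          rw [hcdef, hdd i.castSucc (by omega)]
          congr 1
        have e2 : c i.succ = d ((⟨i.val, hlt⟩ : Fin m).succ) := by
          rw [hcdef, hdd i.succ (by omega)]
          congr 1
        rw [e1, e2]
        exact hdc ⟨i.val, hlt⟩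
      · have e1 : c i.castSucc = S := by
          rw [hcdef, hdd i.castSucc (by omega)]
          have e : (⟨(i.castSucc).val, by omega⟩ : Fin (m+1)) = Fin.last m := by
            apply Fin.ext; simp [Fin.last, hcs, heq]
          rw [e, hdl]
        have e2 : c i.succ = T := by
          rw [hcdef, huu i.succ (by omega)]
          have e : (⟨(i.succ).val - (m+1), by omega⟩ : Fin (p+1)) = 0 := by
            apply Fin.ext; simp [hss, heq]
          rw [e, hu0]
        rw [e1, e2]
        exact ⟨hS, hT, hST, hmax⟩
      · have e1 : c i.castSucc = u ((⟨i.val - (m+1), by omega⟩ : Fin p).castSucc) := by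
          rw [hcdef, huu i.castSucc (by omega)]
          refine congrArg u ?_
          apply Fin.ext
          simp [hcs]
        have e2 : c i.succ = u ((⟨i.val - (m+1), by omega⟩ : Fin p).succ) := by
          rw [hcdef, huu i.succ (by omega)]
          refine congrArg u ?_
          apply Fin.ext
          simp [hss, Fin.succ]
          omega
        rw [e1, e2]
        exact huc ⟨i.val - (m+1), by omega⟩
  have hkn : k = Fintype.card α := hreg k c hchain
  have hTn : T.card ≤ Fintype.card α := card_le_univ T
  have hcc : S.card < T.card := card_lt_card hST
  omega

end Aux

/-- `F` is an augmenting system containing `N` iff it is regular and weakly union-closed. -/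
theorem augmentingSystem_iff_regular_weaklyUnionClosed
    [Fintype α] [DecidableEq α] (F : Finset (Finset α))
    (hempty : ∅ ∈ F) (huniv : Finset.univ ∈ F) :
    ((∀ A ∈ F, ∀ B ∈ F, (A ∩ B).Nonempty → A ∪ B ∈ F) ∧
      (∀ S ∈ F, ∀ T ∈ F, S ⊂ T → ∃ i ∈ T \ S, insert i S ∈ F)) ↔
    (RegularSystem F ∧ (∀ A ∈ F, ∀ B ∈ F, (A ∩ B).Nonempty → A ∪ B ∈ F)) := by
  constructor
  · rintro ⟨hw, haug⟩
    refine ⟨?_, hw⟩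
    intro k c ⟨h0, hl, hc⟩
    have key : ∀ j : ℕ, ∀ hj : j ≤ k, (c ⟨j, by omega⟩).card = j := by
      intro j
      induction j with
      | zero =>
        intro hj
        have : (⟨0, by omega⟩ : Fin (k+1)) = 0 := by apply Fin.ext; simp
        rw [this, h0, card_empty]
      | succ j ihj =>
        intro hj
        have hjk : j < k := by omega
        have hcov := covers_card_aug haug (hc ⟨j, hjk⟩)
        have e1 : (⟨j, by omega⟩ : Fin (k+1)) = (⟨j, hjk⟩ : Fin k).castSucc := rfl
        have e2 : (⟨j + 1, by omega⟩ : Fin (k+1)) = (⟨j, hjk⟩ : Fin k).succ := rfl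
        rw [e2, hcov, ← e1, ihj (by omega)]
    have := key k le_rfl
    have : (c (Fin.last k)).card = k := by
      have e : (⟨k, by omega⟩ : Fin (k+1)) = Fin.last k := rfl
      rw [← e]; exact this
    rw [hl, card_univ] at this
    omega
  · rintro ⟨hreg, hw⟩
    refine ⟨hw, ?_⟩
    intro S hS T hT hST
    have hne : (F.filter (fun U => S ⊂ U ∧ U ⊆ T)).Nonempty :=
      ⟨T, mem_filter.mpr ⟨hT, hST, le_rfl⟩⟩
    obtain ⟨U, hUs, hUmin⟩ : ∃ U ∈ F.filter (fun U => S ⊂ U ∧ U ⊆ T),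
        ∀ x ∈ F.filter (fun U => S ⊂ U ∧ U ⊆ T), ¬ x < U := by
      obtain ⟨U, hU⟩ := Finset.exists_minimal hne
      exact ⟨U, hU.1, fun x hx hlt => hlt.not_ge (hU.2 hx hlt.le)⟩
    rw [mem_filter] at hUs
    obtain ⟨hU, hSU, hUT⟩ := hUs
    have hcov : Covers F S U := by
      refine ⟨hS, hU, hSU, fun W hW hSW hWU => ?_⟩
      exact hUmin W (mem_filter.mpr ⟨hW, hSW, hWU.subset.trans hUT⟩) hWU
    have hcard := covers_card_reg hreg hempty huniv hcov
    have hsd : (U \ S).card = 1 := by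
      rw [card_sdiff_of_subset hSU.subset]; omega
    obtain ⟨i, hi⟩ := card_eq_one.mp hsd
    have hiUS : i ∈ U \ S := hi ▸ mem_singleton_self i
    rw [mem_sdiff] at hiUS
    refine ⟨i, mem_sdiff.mpr ⟨hUT hiUS.1, hiUS.2⟩, ?_⟩
    have : insert i S = U := by
      apply Finset.Subset.antisymm
      · exact insert_subset hiUS.1 hSU.subset
      · intro x hx
        by_cases hxS : x ∈ S
        · exact mem_insert_of_mem hxS
        · have : x ∈ U \ S := mem_sdiff.mpr ⟨hx, hxS⟩
          rw [hi, mem_singleton] at this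
          rw [this]; exact mem_insert_self i S
    rw [this]; exact hU
end

section
/- Let F be a set system on N. The cone core(F) = {x ∈ ℝ^N : x(S) ≥ 0 for all S ∈ F, x(N) = 0} is a linear subspace of ℝ^N if and only if F is balanced, i.e., there exist positive coefficients λ_S > 0 for S ∈ F \ {∅} with Σ_S λ_S 1_S = 1_N. -/
open Finset

/-- Characteristic vector of a finset. -/
def indic {α : Type*} [DecidableEq α] (T : Finset α) : α → ℝ :=
  fun i => if i ∈ T then 1 else 0

/-- The recession cone of the core of a set system. -/
def coreCone {α : Type*} [Fintype α] (F : Finset (Finset α)) : Set (α → ℝ) :=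
  {x | (∀ S ∈ F, 0 ≤ ∑ i ∈ S, x i) ∧ ∑ i, x i = 0}

open Matrix

/-- Farkas' lemma for finitely many generators, proved by induction
(Fourier–Motzkin style projection). -/
lemma farkas_aux {ι α : Type*} [Fintype α] (s : Finset ι) :
    ∀ (v : ι → (α → ℝ)) (b : α → ℝ),
      (∀ y : α → ℝ, (∀ i ∈ s, 0 ≤ v i ⬝ᵥ y) → 0 ≤ b ⬝ᵥ y) →
      ∃ μ : ι → ℝ, (∀ i, 0 ≤ μ i) ∧ b = ∑ i ∈ s, μ i • v i := by
  classical
  induction s using Finset.induction_on with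
  | empty =>
    intro v b h
    have hb : b = 0 := by
      have h1 := h (-b) (by simp)
      rw [dotProduct_neg] at h1
      have h2 : b ⬝ᵥ b ≤ 0 := by linarith
      have h3 : b ⬝ᵥ b = 0 :=
        le_antisymm h2 (Finset.sum_nonneg fun i _ => mul_self_nonneg _)
      exact (dotProduct_self_eq_zero).mp h3
    exact ⟨0, fun i => le_rfl, by simp [hb]⟩
  | @insert a s ha ih =>
    intro v b h
    by_cases hc : ∀ y : α → ℝ, (∀ i ∈ s, 0 ≤ v i ⬝ᵥ y) → 0 ≤ b ⬝ᵥ y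
    · obtain ⟨μ, hμ, hb⟩ := ih v b hc
      refine ⟨fun i => if i = a then 0 else μ i, fun i => ?_, ?_⟩
      · dsimp only; split
        · exact le_rfl
        · exact hμ i
      · rw [Finset.sum_insert ha]
        simp only [eq_self_iff_true, if_true, zero_smul, zero_add, hb]
        exact Finset.sum_congr rfl fun i hi => by
          rw [if_neg (by rintro rfl; exact ha hi)]
    · push_neg at hc
      obtain ⟨y₀, hy₀, hby₀⟩ := hc
      have hay₀ : v a ⬝ᵥ y₀ < 0 := by
        by_contra hge
        push_neg at hge
        refine absurd (h y₀ ?_) (not_le.mpr hby₀)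
        intro i hi
        rcases Finset.mem_insert.mp hi with rfl | hi
        · exact hge
        · exact hy₀ i hi
      set c := v a ⬝ᵥ y₀ with hc
      have hcne : c ≠ 0 := ne_of_lt hay₀
      set v' : ι → α → ℝ := fun i => v i - (v i ⬝ᵥ y₀ / c) • v a with hv'
      set b' : α → ℝ := b - (b ⬝ᵥ y₀ / c) • v a with hb'
      have key : ∀ (x y : α → ℝ),
          (x - (x ⬝ᵥ y₀ / c) • v a) ⬝ᵥ y = x ⬝ᵥ (y - (v a ⬝ᵥ y / c) • y₀) := by
        intro x y
        rw [sub_dotProduct, smul_dotProduct, dotProduct_sub,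
          dotProduct_smul, smul_eq_mul, smul_eq_mul]
        ring
      have h' : ∀ y : α → ℝ, (∀ i ∈ s, 0 ≤ v' i ⬝ᵥ y) → 0 ≤ b' ⬝ᵥ y := by
        intro y hy
        have hproj : v a ⬝ᵥ (y - (v a ⬝ᵥ y / c) • y₀) = 0 := by
          rw [dotProduct_sub, dotProduct_smul, smul_eq_mul,
            div_mul_cancel₀ _ hcne, sub_self]
        have := h (y - (v a ⬝ᵥ y / c) • y₀) ?_
        · rw [hb', key]; exact this
        · intro i hi
          rcases Finset.mem_insert.mp hi with rfl | hi
          · rw [hproj]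
          · rw [← key]; exact hy i hi
      obtain ⟨μ, hμ, hbs⟩ := ih v' b' h'
      set t : ℝ := b ⬝ᵥ y₀ / c - ∑ i ∈ s, μ i * (v i ⬝ᵥ y₀ / c) with ht
      have htpos : 0 ≤ t := by
        have h1 : 0 < b ⬝ᵥ y₀ / c := div_pos_of_neg_of_neg hby₀ hay₀
        have h2 : ∑ i ∈ s, μ i * (v i ⬝ᵥ y₀ / c) ≤ 0 := by
          apply Finset.sum_nonpos
          intro i hi
          exact mul_nonpos_of_nonneg_of_nonpos (hμ i)
            (div_nonpos_of_nonneg_of_nonpos (hy₀ i hi) (le_of_lt hay₀))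
        rw [ht]; linarith
      refine ⟨fun i => if i = a then t else μ i, fun i => ?_, ?_⟩
      · dsimp only; split
        · exact htpos
        · exact hμ i
      · rw [Finset.sum_insert ha]
        simp only [eq_self_iff_true, if_true]
        have hb2 : b = (∑ i ∈ s, μ i • v' i) + (b ⬝ᵥ y₀ / c) • v a := by
          rw [← hbs, hb']; abel
        have hsum : ∑ i ∈ s, μ i • v' i
            = (∑ i ∈ s, μ i • v i) - (∑ i ∈ s, μ i * (v i ⬝ᵥ y₀ / c)) • v a := by
          rw [Finset.sum_smul]
          rw [← Finset.sum_sub_distrib]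
          refine Finset.sum_congr rfl fun i hi => ?_
          rw [hv']
          rw [smul_sub, smul_smul]
        rw [hb2, hsum, ht]
        rw [sub_smul]
        rw [Finset.sum_congr rfl (fun i hi =>
          by rw [if_neg (by rintro rfl; exact ha hi)] :
            ∀ i ∈ s, (if i = a then t else μ i) • v i = μ i • v i)]
        abel

section helpers
variable {α : Type*} [Fintype α] [DecidableEq α]

lemma indic_dot (S : Finset α) (y : α → ℝ) : indic S ⬝ᵥ y = ∑ i ∈ S, y i := by
  unfold indic dotProduct
  simp only [ite_mul, one_mul, zero_mul]
  rw [Finset.sum_ite_mem, Finset.univ_inter]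

lemma indic_empty : indic (∅ : Finset α) = 0 := by
  funext i; simp [indic]

lemma sum_dot {ι : Type*} (s : Finset ι) (f : ι → α → ℝ) (y : α → ℝ) :
    (∑ i ∈ s, f i) ⬝ᵥ y = ∑ i ∈ s, f i ⬝ᵥ y := by
  unfold dotProduct
  rw [Finset.sum_comm]
  exact Finset.sum_congr rfl fun j _ => by rw [Finset.sum_apply, Finset.sum_mul]

/-- per-`S₀` balancing family, from Farkas' lemma. -/
lemma exists_nu (F : Finset (Finset α)) (huniv : Finset.univ ∈ F)
    (hcore : ∀ x ∈ coreCone F, ∀ S ∈ F, ∑ i ∈ S, x i = 0) (S₀ : Finset α) :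
    ∃ ν : Finset α → ℝ, (∀ S, 0 ≤ ν S) ∧
      (S₀ ∈ F.filter (· ≠ ∅) → 0 < ν S₀ ∧
        ∑ S ∈ F.filter (· ≠ ∅), ν S • indic S = indic (Finset.univ : Finset α)) := by
  classical
  by_cases hS₀ : S₀ ∈ F.filter (· ≠ ∅)
  swap
  · exact ⟨0, fun S => le_rfl, fun h => absurd h hS₀⟩
  obtain ⟨hS₀F, hS₀ne⟩ := Finset.mem_filter.mp hS₀
  have hS₀ne' : S₀.Nonempty := Finset.nonempty_iff_ne_empty.mpr hS₀ne
  obtain ⟨i₀, hi₀⟩ := hS₀ne'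
  set v : Option (Finset α) → α → ℝ := fun o => o.elim (-(indic Finset.univ)) indic with hv
  set gens : Finset (Option (Finset α)) := insert none (F.image some) with hgens
  have hfar := farkas_aux gens v (-(indic S₀)) ?_
  · obtain ⟨μ, hμ, heq⟩ := hfar
    have hnone : none ∉ F.image some := by simp
    rw [hgens, Finset.sum_insert hnone,
      Finset.sum_image (fun a _ b _ h => Option.some_injective _ h)] at heq
    rw [show v none = -(indic Finset.univ) from rfl] at heq
    simp only [show ∀ S, v (some S) = indic S from fun S => rfl] at heq
    have hmain : μ none • indic (Finset.univ : Finset α)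
        = indic S₀ + ∑ S ∈ F, μ (some S) • indic S := by
      funext i
      have hpt := congrFun heq i
      simp only [Pi.neg_apply, Pi.add_apply, Pi.smul_apply, smul_eq_mul,
        Finset.sum_apply, mul_neg] at hpt ⊢
      linarith
    have hμ1 : 1 ≤ μ none := by
      have hpt := congrFun hmain i₀
      simp only [Pi.add_apply, Pi.smul_apply, smul_eq_mul, Finset.sum_apply] at hpt
      rw [show indic Finset.univ i₀ = 1 by rw [indic]; exact if_pos (Finset.mem_univ i₀),
        mul_one] at hpt
      have h1 : indic S₀ i₀ = 1 := by rw [indic]; exact if_pos hi₀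
      have h2 : 0 ≤ ∑ S ∈ F, μ (some S) * indic S i₀ := by
        apply Finset.sum_nonneg
        intro S _
        exact mul_nonneg (hμ _) (by rw [indic]; split <;> norm_num)
      rw [h1] at hpt
      linarith
    have hμ0 : (0:ℝ) < μ none := lt_of_lt_of_le one_pos hμ1
    refine ⟨fun S => (μ (some S) + if S = S₀ then 1 else 0) / μ none, fun S => ?_, fun _ => ?_⟩
    · apply div_nonneg _ (le_of_lt hμ0)
      have : (0:ℝ) ≤ if S = S₀ then 1 else 0 := by split <;> norm_num
      linarith [hμ (some S)]
    constructor
    · apply div_pos _ hμ0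
      rw [if_pos rfl]
      linarith [hμ (some S₀)]
    · have hsplit : ∑ S ∈ F, (μ (some S) + if S = S₀ then 1 else 0) • indic S
          = μ none • indic (Finset.univ : Finset α) := by
        rw [hmain]
        rw [Finset.sum_congr rfl (fun S _ => add_smul (μ (some S)) _ (indic S)),
          Finset.sum_add_distrib]
        have hind : ∑ S ∈ F, (if S = S₀ then (1:ℝ) else 0) • indic S = indic S₀ := by
          rw [Finset.sum_congr rfl (fun S _ => by rw [ite_smul, one_smul, zero_smul] :
            ∀ S ∈ F, (if S = S₀ then (1:ℝ) else 0) • indic S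
              = if S = S₀ then indic S else 0)]
          rw [Finset.sum_ite_eq' F S₀ indic, if_pos hS₀F]
        rw [hind]; abel
      have hfilter : ∑ S ∈ F.filter (· ≠ ∅), (μ (some S) + if S = S₀ then 1 else 0) • indic S
          = ∑ S ∈ F, (μ (some S) + if S = S₀ then 1 else 0) • indic S := by
        rw [← Finset.sum_filter_add_sum_filter_not F (· ≠ ∅)]
        have hz : ∑ S ∈ F.filter (fun S => ¬ S ≠ ∅),
            (μ (some S) + if S = S₀ then 1 else 0) • indic S = 0 := by
          apply Finset.sum_eq_zero
          intro S hS
          have : S = ∅ := by simpa using (Finset.mem_filter.mp hS).2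
          rw [this, indic_empty, smul_zero]
        rw [hz, add_zero]
      have hstep : ∀ S ∈ F.filter (· ≠ ∅),
          ((μ (some S) + if S = S₀ then 1 else 0) / μ none) • indic S
          = (μ none)⁻¹ • ((μ (some S) + if S = S₀ then 1 else 0) • indic S) := by
        intro S _
        rw [div_eq_inv_mul, mul_smul]
      rw [Finset.sum_congr rfl hstep, ← Finset.smul_sum, hfilter, hsplit,
        inv_smul_smul₀ (ne_of_gt hμ0)]
  · intro y hy
    have hyuniv : ∑ i, y i = 0 := by
      have h1 := hy (some Finset.univ)
        (Finset.mem_insert_of_mem (Finset.mem_image_of_mem _ huniv))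
      have h2 := hy none (Finset.mem_insert_self _ _)
      rw [show v none = -(indic Finset.univ) from rfl, neg_dotProduct, indic_dot] at h2
      rw [show v (some Finset.univ) = indic Finset.univ from rfl, indic_dot] at h1
      linarith
    have hyc : y ∈ coreCone F := by
      refine ⟨fun S hS => ?_, hyuniv⟩
      have := hy (some S) (Finset.mem_insert_of_mem (Finset.mem_image_of_mem _ hS))
      rwa [show v (some S) = indic S from rfl, indic_dot] at this
    have := hcore y hyc S₀ hS₀F
    rw [neg_dotProduct, indic_dot, this, neg_zero]

end helpers

/-- `core(F)` is a linear subspace iff `F` is balanced. -/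
theorem coreCone_subspace_iff_balanced
    {α : Type*} [Fintype α] [DecidableEq α] (F : Finset (Finset α))
    (hempty : ∅ ∈ F) (huniv : Finset.univ ∈ F) :
    (∃ U : Submodule ℝ (α → ℝ), (U : Set (α → ℝ)) = coreCone F) ↔
      ∃ lam : Finset α → ℝ, (∀ S ∈ F, S ≠ ∅ → 0 < lam S) ∧
        ∑ S ∈ F.filter (· ≠ ∅), lam S • indic S = indic (Finset.univ : Finset α) := by
  classical
  constructor
  · rintro ⟨U, hU⟩
    have hcore : ∀ x ∈ coreCone F, ∀ S ∈ F, ∑ i ∈ S, x i = 0 := by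
      intro x hx S hS
      have hxU : x ∈ U := by rw [← hU] at hx; exact hx
      have hnx : -x ∈ coreCone F := by
        rw [← hU]; exact U.neg_mem hxU
      have h1 := hx.1 S hS
      have h2 := hnx.1 S hS
      simp only [Pi.neg_apply, Finset.sum_neg_distrib] at h2
      linarith
    by_cases hne : (F.filter (· ≠ ∅)).Nonempty
    · choose ν hν0 hν using exists_nu F huniv hcore
      set m : ℝ := ((F.filter (· ≠ ∅)).card : ℝ) with hm'
      have hm : 0 < m := by
        rw [hm']; exact_mod_cast Finset.card_pos.mpr hne
      refine ⟨fun S => (∑ T ∈ F.filter (· ≠ ∅), ν T S) / m, ?_, ?_⟩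
      · intro S hSF hSne
        have hSf : S ∈ F.filter (· ≠ ∅) := Finset.mem_filter.mpr ⟨hSF, hSne⟩
        apply div_pos _ hm
        have hp := (hν S hSf).1
        have hle : ν S S ≤ ∑ T ∈ F.filter (· ≠ ∅), ν T S :=
          Finset.single_le_sum (fun T _ => hν0 T S) hSf
        linarith
      · have hstep : ∀ S ∈ F.filter (· ≠ ∅),
            ((∑ T ∈ F.filter (· ≠ ∅), ν T S) / m) • indic S
            = m⁻¹ • ∑ T ∈ F.filter (· ≠ ∅), ν T S • indic S := by
          intro S _
          rw [div_eq_inv_mul, mul_smul, Finset.sum_smul]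
        rw [Finset.sum_congr rfl hstep, ← Finset.smul_sum, Finset.sum_comm]
        rw [Finset.sum_congr rfl (fun T hT => (hν T hT).2)]
        rw [Finset.sum_const, ← Nat.cast_smul_eq_nsmul ℝ]
        exact inv_smul_smul₀ (ne_of_gt hm) _
    · rw [Finset.not_nonempty_iff_eq_empty] at hne
      refine ⟨0, fun S hSF hSne => ?_, ?_⟩
      · have : S ∈ F.filter (· ≠ ∅) := Finset.mem_filter.mpr ⟨hSF, hSne⟩
        rw [hne] at this
        exact absurd this (Finset.notMem_empty _)
      · have hue : (Finset.univ : Finset α) = ∅ := by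
          by_contra h
          have : Finset.univ ∈ F.filter (· ≠ ∅) := Finset.mem_filter.mpr ⟨huniv, h⟩
          rw [hne] at this
          exact absurd this (Finset.notMem_empty _)
        rw [hne, Finset.sum_empty, hue, indic_empty]
  · rintro ⟨lam, hpos, hsum⟩
    refine ⟨{ carrier := {x | ∀ S ∈ F, ∑ i ∈ S, x i = 0}
            , add_mem' := ?_, zero_mem' := ?_, smul_mem' := ?_ }, ?_⟩
    · intro a b ha hb S hS
      simp only [Set.mem_setOf_eq] at ha hb ⊢
      rw [show ∑ i ∈ S, (a + b) i = ∑ i ∈ S, (a i + b i) from rfl,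
        Finset.sum_add_distrib, ha S hS, hb S hS, add_zero]
    · intro S hS; simp
    · intro c x hx S hS
      simp only [Set.mem_setOf_eq] at hx ⊢
      have : ∑ i ∈ S, (c • x) i = c * ∑ i ∈ S, x i := by
        simp [Finset.mul_sum]
      rw [this, hx S hS, mul_zero]
    · ext x
      constructor
      · intro hx
        have hx' : ∀ S ∈ F, ∑ i ∈ S, x i = 0 := hx
        exact ⟨fun S hS => le_of_eq (hx' S hS).symm, hx' Finset.univ huniv⟩
      · intro hx
        show ∀ S ∈ F, ∑ i ∈ S, x i = 0
        intro S hS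
        by_cases hSe : S = ∅
        · rw [hSe]; simp
        have hS' : S ∈ F.filter (· ≠ ∅) := Finset.mem_filter.mpr ⟨hS, hSe⟩
        have hdot : ∑ T ∈ F.filter (· ≠ ∅), lam T * ∑ i ∈ T, x i = ∑ i, x i := by
          have hterms : ∑ T ∈ F.filter (· ≠ ∅), lam T * ∑ i ∈ T, x i
              = ∑ T ∈ F.filter (· ≠ ∅), (lam T • indic T) ⬝ᵥ x :=
            Finset.sum_congr rfl fun T _ => by
              rw [smul_dotProduct, indic_dot, smul_eq_mul]
          rw [hterms, ← sum_dot, hsum, indic_dot]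
        have hzero : ∑ T ∈ F.filter (· ≠ ∅), lam T * ∑ i ∈ T, x i = 0 := by
          rw [hdot]; exact hx.2
        have hterm : ∀ T ∈ F.filter (· ≠ ∅), 0 ≤ lam T * ∑ i ∈ T, x i := by
          intro T hT
          obtain ⟨hTF, hTne⟩ := Finset.mem_filter.mp hT
          exact mul_nonneg (le_of_lt (hpos T hTF hTne)) (hx.1 T hTF)
        have hSz := (Finset.sum_eq_zero_iff_of_nonneg hterm).mp hzero S hS'
        exact (mul_eq_zero.mp hSz).resolve_left (ne_of_gt (hpos S hS hSe))
end

section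
/- Let F = O(N, ≤) be the set system of downsets of a poset on N. If the poset (N, ≤) is connected (its comparability/Hasse graph is connected), then every game v on F has nonempty core. Conversely, if (N, ≤) is not connected, there exists a game on F with empty core. -/
open Finset

/-- The comparability graph of a poset. -/
def compGraph (α : Type*) [PartialOrder α] : SimpleGraph α where
  Adj i j := i ≠ j ∧ (i ≤ j ∨ j ≤ i)
  symm := ⟨fun _ _ h => ⟨Ne.symm h.1, h.2.symm⟩⟩
  loopless := ⟨fun _ h => h.1 rfl⟩

/-- `S` is a downset of the poset. -/
def IsDownset {α : Type*} [PartialOrder α] (S : Finset α) : Prop :=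
  ∀ i ∈ S, ∀ j, j ≤ i → j ∈ S

lemma exists_cross {α : Type*} [DecidableEq α] [PartialOrder α] {S : Finset α}
    (hS : IsDownset S) {i j : α} (p : (compGraph α).Walk i j) :
    i ∈ S → j ∉ S → ∃ a b : α, a ∈ S ∧ b ∉ S ∧ a < b := by
  induction p with
  | nil => intro hi hj; exact absurd hi hj
  | @cons u v w h q ih =>
    intro hi hj
    by_cases hv : v ∈ S
    · exact ih hv hj
    · refine ⟨u, v, hi, hv, ?_⟩
      rcases h.2 with h1 | h1
      · exact lt_of_le_of_ne h1 h.1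
      · exact absurd (hS u hi v h1) hv

/-- If the poset `(N, ≤)` is connected then every game on `O(N)` has nonempty core;
otherwise some game on `O(N)` has empty core. -/
theorem core_nonempty_iff_poset_connected
    (α : Type*) [Fintype α] [DecidableEq α] [PartialOrder α] [Nonempty α] :
    ((compGraph α).Connected →
      ∀ v : Finset α → ℝ, v ∅ = 0 →
        {x : α → ℝ | (∀ S : Finset α, IsDownset S → v S ≤ ∑ i ∈ S, x i) ∧
          ∑ i, x i = v Finset.univ}.Nonempty) ∧
    (¬ (compGraph α).Connected →
      ∃ v : Finset α → ℝ, v ∅ = 0 ∧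
        {x : α → ℝ | (∀ S : Finset α, IsDownset S → v S ≤ ∑ i ∈ S, x i) ∧
          ∑ i, x i = v Finset.univ} = ∅) := by
  classical
  constructor
  · -- connected ⇒ nonempty core for every game
    intro hconn v hv0
    have hcard : (0:ℝ) < (Fintype.card α : ℝ) := by
      exact_mod_cast Fintype.card_pos
    set c : ℝ := v Finset.univ / (Fintype.card α : ℝ) with hc
    set P : Finset (α × α) := Finset.univ.filter (fun p => p.1 < p.2) with hP
    set w : α → ℝ :=
      fun i => ∑ p ∈ P, ((if p.1 = i then (1:ℝ) else 0) - (if p.2 = i then 1 else 0)) with hw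
    have sumw : ∀ S : Finset α,
        ∑ i ∈ S, w i
          = ∑ p ∈ P, ((if p.1 ∈ S then (1:ℝ) else 0) - (if p.2 ∈ S then 1 else 0)) := by
      intro S
      rw [hw, Finset.sum_comm]
      refine Finset.sum_congr rfl fun p _ => ?_
      rw [Finset.sum_sub_distrib, Finset.sum_ite_eq, Finset.sum_ite_eq]
    have sumw_univ : ∑ i, w i = 0 := by
      rw [sumw]
      simp
    -- nonnegativity of each term for downsets
    have term_nonneg : ∀ S : Finset α, IsDownset S → ∀ p ∈ P,
        (0:ℝ) ≤ (if p.1 ∈ S then (1:ℝ) else 0) - (if p.2 ∈ S then 1 else 0) := by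
      intro S hS p hp
      simp only [hP, Finset.mem_filter] at hp
      by_cases h2 : p.2 ∈ S
      · have h1 : p.1 ∈ S := hS p.2 h2 p.1 hp.2.le
        simp [h1, h2]
      · by_cases h1 : p.1 ∈ S <;> simp [h1, h2]
    have sumw_nonneg : ∀ S : Finset α, IsDownset S → (0:ℝ) ≤ ∑ i ∈ S, w i := by
      intro S hS
      rw [sumw]
      exact Finset.sum_nonneg (term_nonneg S hS)
    have sumw_one : ∀ S : Finset α, IsDownset S → S.Nonempty → S ≠ Finset.univ →
        (1:ℝ) ≤ ∑ i ∈ S, w i := by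
      intro S hS hne hproper
      obtain ⟨i, hi⟩ := hne
      have : ∃ j, j ∉ S := by
        by_contra hcontra
        push_neg at hcontra
        exact hproper (Finset.eq_univ_iff_forall.2 hcontra)
      obtain ⟨j, hj⟩ := this
      obtain ⟨a, b, ha, hb, hab⟩ :=
        exists_cross hS ((hconn.preconnected i j).some) hi hj
      have hmem : (a, b) ∈ P := by
        simp [hP, hab]
      rw [sumw]
      calc (1:ℝ) = (if (a,b).1 ∈ S then (1:ℝ) else 0) - (if (a,b).2 ∈ S then 1 else 0) := by
              simp [ha, hb]
        _ ≤ _ := Finset.single_le_sum (term_nonneg S hS) hmem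
    -- choose M
    have hpne : (Finset.powerset (Finset.univ : Finset α)).Nonempty := ⟨∅, by simp⟩
    set M : ℝ := max 0 (Finset.sup' (Finset.powerset (Finset.univ : Finset α)) hpne
        (fun S => (v S - (S.card : ℝ) * c : ℝ))) with hM
    have hM0 : (0:ℝ) ≤ M := le_max_left _ _
    have hMS : ∀ S : Finset α, v S - S.card * c ≤ M := by
      intro S
      refine le_trans ?_ (le_max_right _ _)
      exact Finset.le_sup' (fun S => v S - (S.card : ℝ) * c) (Finset.mem_powerset.2 (Finset.subset_univ S))
    refine ⟨fun i => M * w i + c, ?_, ?_⟩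
    · intro S hS
      have hsum : ∑ i ∈ S, (M * w i + c) = M * (∑ i ∈ S, w i) + S.card * c := by
        rw [Finset.sum_add_distrib, Finset.sum_const, ← Finset.mul_sum, nsmul_eq_mul]
      rw [hsum]
      rcases eq_or_ne S Finset.univ with rfl | hproper
      · rw [sumw_univ, mul_zero, zero_add, hc]
        rw [Finset.card_univ, mul_div_cancel₀]
        exact hcard.ne'
      rcases Finset.eq_empty_or_nonempty S with rfl | hne
      · simp [hv0]
      · have h1 := sumw_one S hS hne hproper
        have h2 : M ≤ M * ∑ i ∈ S, w i := le_mul_of_one_le_right hM0 h1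
        have h3 := hMS S
        linarith
    · have : ∑ i, (M * w i + c) = M * (∑ i, w i) + (Fintype.card α : ℝ) * c := by
        rw [Finset.sum_add_distrib, Finset.sum_const, ← Finset.mul_sum, Finset.card_univ,
          nsmul_eq_mul]
      rw [this, sumw_univ, mul_zero, zero_add, hc, mul_div_cancel₀]
      exact hcard.ne'
  · -- disconnected ⇒ some game with empty core
    intro hconn
    rw [SimpleGraph.connected_iff] at hconn
    push_neg at hconn
    have hnp : ¬ (compGraph α).Preconnected := by
      intro h
      exact (hconn h).false (Classical.arbitrary α)
    rw [SimpleGraph.Preconnected] at hnp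
    push_neg at hnp
    obtain ⟨i, j, hij⟩ := hnp
    set A : Finset α := Finset.univ.filter (fun k => (compGraph α).Reachable i k) with hA
    have hiA : i ∈ A := by simp [hA]
    have hjA : j ∉ A := by simp [hA, hij]
    have hAdown : IsDownset A := by
      intro k hk l hl
      simp only [hA, Finset.mem_filter, Finset.mem_univ, true_and] at hk ⊢
      rcases eq_or_ne l k with rfl | hlk
      · exact hk
      · exact hk.trans (SimpleGraph.Adj.reachable ⟨(Ne.symm hlk), Or.inr hl⟩)
    have hAcdown : IsDownset Aᶜ := by
      intro k hk l hl
      simp only [Finset.mem_compl] at hk ⊢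
      intro hlA
      apply hk
      simp only [hA, Finset.mem_filter, Finset.mem_univ, true_and] at hlA ⊢
      rcases eq_or_ne l k with rfl | hlk
      · exact hlA
      · exact hlA.trans (SimpleGraph.Adj.reachable ⟨hlk, Or.inl hl⟩)
    refine ⟨fun S => if S = A ∨ S = Aᶜ ∨ S = Finset.univ then 1 else 0, ?_, ?_⟩
    · have h1 : (∅ : Finset α) ≠ A := fun h => by rw [← h] at hiA; simp at hiA
      have h2 : (∅ : Finset α) ≠ Aᶜ := fun h => by
        have : j ∈ Aᶜ := Finset.mem_compl.2 hjA
        rw [← h] at this; simp at this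
      have h3 : (∅ : Finset α) ≠ (Finset.univ : Finset α) :=
        (Finset.univ_nonempty (α := α)).ne_empty.symm
      simp [h1, h2, h3]
    · rw [Set.eq_empty_iff_forall_notMem]
      rintro x ⟨hle, htot⟩
      have hA1 : (1:ℝ) ≤ ∑ k ∈ A, x k := by
        have := hle A hAdown
        simpa using this
      have hA2 : (1:ℝ) ≤ ∑ k ∈ Aᶜ, x k := by
        have := hle Aᶜ hAcdown
        simpa using this
      have hsum : ∑ k ∈ A, x k + ∑ k ∈ Aᶜ, x k = ∑ k, x k :=
        Finset.sum_add_sum_compl A x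
      have huniv : (∑ k, x k) = 1 := by
        rw [htot]; simp
      linarith
end

section
/- Let F be a nonempty set system on N containing all singletons (atomistic), and v a nonnegative game on F. Then core(v) = core⁺(v), where core⁺(v) is the set of nonnegative core elements. Moreover, if F is closed under intersection, v is nonnegative and balanced, and F is not atomistic, then core(v) ≠ core⁺(v) and core(v) is unbounded. -/
open Finset

/-- The core of a game on a set system. -/
def gameCore {α : Type*} [Fintype α] (F : Finset (Finset α)) (v : Finset α → ℝ) :
    Set (α → ℝ) :=
  {x | (∀ S ∈ F, v S ≤ ∑ i ∈ S, x i) ∧ ∑ i, x i = v Finset.univ}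

/-- The positive core of a game on a set system. -/
def gameCorePos {α : Type*} [Fintype α] (F : Finset (Finset α)) (v : Finset α → ℝ) :
    Set (α → ℝ) :=
  {x | x ∈ gameCore F v ∧ ∀ i, 0 ≤ x i}

/-- If `F` is atomistic and `v` nonnegative, the core equals the positive core.
If `F` is closed under intersection, `v` is nonnegative and balanced, and `F` is not
atomistic, then the core differs from the positive core and is unbounded. -/
theorem core_eq_corePos_iff_atomistic
    {α : Type*} [Fintype α] [DecidableEq α] (F : Finset (Finset α))
    (hempty : ∅ ∈ F) (huniv : Finset.univ ∈ F)
    (v : Finset α → ℝ) (hv0 : v ∅ = 0) (hvnn : ∀ S ∈ F, 0 ≤ v S) :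
    ((∀ i : α, {i} ∈ F) → gameCore F v = gameCorePos F v) ∧
    ((∀ A ∈ F, ∀ B ∈ F, A ∩ B ∈ F) → (gameCore F v).Nonempty →
      ¬ (∀ i : α, {i} ∈ F) →
      gameCore F v ≠ gameCorePos F v ∧ ¬ Bornology.IsBounded (gameCore F v)) := by
  constructor
  · intro hatom
    ext x
    simp only [gameCorePos, Set.mem_setOf_eq]
    constructor
    · intro hx
      refine ⟨hx, fun i => ?_⟩
      have h := hx.1 {i} (hatom i)
      simp only [Finset.sum_singleton] at h
      exact le_trans (hvnn {i} (hatom i)) h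
    · exact fun h => h.1
  · rintro hinter ⟨x, hx⟩ hnatom
    push_neg at hnatom
    obtain ⟨i, hi⟩ := hnatom
    classical
    set G := F.filter (fun S => i ∈ S) with hG
    have hGne : G.Nonempty := ⟨univ, by simp [hG, huniv]⟩
    have key : ∀ (H : Finset (Finset α)) (h : H.Nonempty), (∀ S ∈ H, S ∈ F) →
        H.inf' h id ∈ F := by
      intro H h
      induction h using Finset.Nonempty.cons_induction with
      | singleton a => intro hs; simpa using hs a (by simp)
      | cons a s ha hs ih =>
        intro hmem
        rw [Finset.inf'_cons hs]
        exact hinter a (hmem a (by simp)) _ (ih (fun S hS => hmem S (by simp [hS])))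
    set T := G.inf' hGne id with hT
    have hTF : T ∈ F := key G hGne (fun S hS => (Finset.mem_filter.mp hS).1)
    have hiT : i ∈ T := by
      rw [hT, Finset.inf'_eq_inf]
      rw [Finset.mem_inf]
      intro S hS
      exact (Finset.mem_filter.mp hS).2
    have hTle : ∀ S ∈ F, i ∈ S → T ⊆ S := by
      intro S hS hiS
      exact Finset.inf'_le id (Finset.mem_filter.mpr ⟨hS, hiS⟩)
    have hTne : T ≠ {i} := fun h => hi (h ▸ hTF)
    obtain ⟨j, hjT, hji⟩ : ∃ j ∈ T, j ≠ i := by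
      by_contra h
      push_neg at h
      apply hTne
      apply Finset.Subset.antisymm
      · intro k hk; simp [h k hk]
      · simp [hiT]
    -- the ray
    set y : ℝ → α → ℝ := fun t k => x k + (if k = j then t else 0) - (if k = i then t else 0)
      with hy
    have hsum : ∀ (t : ℝ) (S : Finset α), ∑ k ∈ S, y t k =
        (∑ k ∈ S, x k) + (if j ∈ S then t else 0) - (if i ∈ S then t else 0) := by
      intro t S
      simp only [hy]
      rw [Finset.sum_sub_distrib, Finset.sum_add_distrib, Finset.sum_ite_eq' S j (fun _ => t),
        Finset.sum_ite_eq' S i (fun _ => t)]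
    have hcore : ∀ t : ℝ, 0 ≤ t → y t ∈ gameCore F v := by
      intro t ht
      constructor
      · intro S hS
        rw [hsum]
        by_cases hiS : i ∈ S
        · have hjS : j ∈ S := hTle S hS hiS hjT
          simp only [hiS, hjS, if_true]
          linarith [hx.1 S hS]
        · simp only [hiS, if_false]
          have := hx.1 S hS
          by_cases hjS : j ∈ S <;> simp [hjS] <;> linarith
      · rw [hsum]
        simp only [Finset.mem_univ, if_true]
        linarith [hx.2]
    have hji' : j ≠ i := hji
    constructor
    · intro heq
      set t := max 0 (x i + 1) with ht
      have ht0 : (0:ℝ) ≤ t := le_max_left _ _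
      have hyt : y t ∈ gameCorePos F v := heq ▸ hcore t ht0
      have hle : x i + 1 ≤ t := le_max_right _ _
      have h2 := hyt.2 i
      simp [hy, Ne.symm hji'] at h2
      linarith
    · intro hb
      obtain ⟨C, hC⟩ := (Metric.isBounded_iff_subset_closedBall 0).mp hb
      have hnorm : ∀ t : ℝ, 0 ≤ t → |x j + t| ≤ C := by
        intro t ht
        have hmem := hC (hcore t ht)
        simp only [Metric.mem_closedBall, dist_zero_right] at hmem
        have h1 : |y t j| ≤ ‖y t‖ := by
          simpa using norm_le_pi_norm (y t) j
        have h2 : y t j = x j + t := by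
          simp [hy, hji']
        rw [h2] at h1
        linarith
      have h0 := hnorm 0 le_rfl
      have hCnn : 0 ≤ C := le_trans (abs_nonneg _) h0
      have h1 := hnorm (C + |x j| + 1) (by positivity)
      have : x j + (C + |x j| + 1) ≤ |x j + (C + |x j| + 1)| := le_abs_self _
      have hxj : -|x j| ≤ x j := neg_abs_le _
      linarith
end

section
/- Let F be a weakly union-closed set system containing all singletons (a partition system), and let v be a game on F with v̄ its extension to 2^N defined by v̄(S) = Σ_{T maximal in F(S)} v(T). Then core(v) = core(v̄). -/
open Finset
open scoped Classical

/-- The extension of a game `v` on `F` to all coalitions, summing `v` over the maximal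
feasible subsets. -/
noncomputable def extGame {α : Type*} [Fintype α] [DecidableEq α]
    (F : Finset (Finset α)) (v : Finset α → ℝ) (S : Finset α) : ℝ :=
  ∑ T ∈ F.filter (fun T => T ⊆ S ∧ ∀ U ∈ F, U ⊆ S → T ⊆ U → T = U), v T

lemma extGame_of_mem {α : Type*} [Fintype α] [DecidableEq α]
    (F : Finset (Finset α)) (v : Finset α → ℝ) {S : Finset α} (hS : S ∈ F) :
    extGame F v S = v S := by
  have : F.filter (fun T => T ⊆ S ∧ ∀ U ∈ F, U ⊆ S → T ⊆ U → T = U) = {S} := by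
    ext T
    simp only [mem_filter, mem_singleton]
    constructor
    · rintro ⟨hTF, hTS, hmax⟩
      exact hmax S hS (subset_refl S) hTS
    · rintro rfl
      exact ⟨hS, subset_refl _, fun U hU hUS hSU => subset_antisymm hSU hUS⟩
  rw [extGame, this, sum_singleton]

/-- For a partition system, the core of `v` equals the core of its extension `v̄`. -/
theorem core_eq_core_extension
    {α : Type*} [Fintype α] [DecidableEq α] (F : Finset (Finset α))
    (hempty : ∅ ∈ F) (huniv : Finset.univ ∈ F)
    (hsing : ∀ i : α, {i} ∈ F)
    (hwuc : ∀ A ∈ F, ∀ B ∈ F, (A ∩ B).Nonempty → A ∪ B ∈ F)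
    (v : Finset α → ℝ) (hv0 : v ∅ = 0) :
    {x : α → ℝ | (∀ S ∈ F, v S ≤ ∑ i ∈ S, x i) ∧ ∑ i, x i = v Finset.univ} =
    {x : α → ℝ | (∀ S : Finset α, extGame F v S ≤ ∑ i ∈ S, x i) ∧
      ∑ i, x i = extGame F v Finset.univ} := by
  ext x
  simp only [Set.mem_setOf_eq]
  rw [extGame_of_mem F v huniv]
  constructor
  · rintro ⟨h, hN⟩
    refine ⟨fun S => ?_, hN⟩
    set M := F.filter (fun T => T ⊆ S ∧ ∀ U ∈ F, U ⊆ S → T ⊆ U → T = U) with hM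
    -- M covers S
    have hcover : ∀ i ∈ S, ∃ T ∈ M, i ∈ T := by
      intro i hi
      have hne : (F.filter (fun T => T ⊆ S ∧ i ∈ T)).Nonempty :=
        ⟨{i}, by simp [hsing i, singleton_subset_iff.mpr hi]⟩
      obtain ⟨T, hT, hTmax⟩ := Finset.exists_max_image _ card hne
      simp only [mem_filter] at hT
      refine ⟨T, ?_, hT.2.2⟩
      simp only [hM, mem_filter]
      refine ⟨hT.1, hT.2.1, fun U hU hUS hTU => ?_⟩
      have hiU : i ∈ U := hTU hT.2.2
      have := hTmax U (by simp [mem_filter, hU, hUS, hiU])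
      exact Finset.eq_of_subset_of_card_le hTU this
    have hsub : ∀ T ∈ M, T ⊆ S := by
      intro T hT; exact (mem_filter.mp hT).2.1
    have hSeq : S = M.biUnion id := by
      ext i
      simp only [mem_biUnion, id]
      exact ⟨fun hi => hcover i hi, fun ⟨T, hT, hiT⟩ => hsub T hT hiT⟩
    have hdisj : (M : Set (Finset α)).PairwiseDisjoint id := by
      intro A hA B hB hAB
      simp only [Finset.coe_filter, Set.mem_setOf_eq, hM, Finset.mem_coe,
        mem_filter] at hA hB
      by_contra hnd
      have hne : (A ∩ B).Nonempty :=
        Finset.not_disjoint_iff_nonempty_inter.mp (by simpa [Function.onFun] using hnd)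
      have hAB' : A ∪ B ∈ F := hwuc A hA.1 B hB.1 hne
      have hU : A ∪ B ⊆ S := Finset.union_subset hA.2.1 hB.2.1
      have h1 : A = A ∪ B := hA.2.2 _ hAB' hU Finset.subset_union_left
      have h2 : B = A ∪ B := hB.2.2 _ hAB' hU Finset.subset_union_right
      exact hAB (h1.trans h2.symm)
    calc extGame F v S = ∑ T ∈ M, v T := rfl
      _ ≤ ∑ T ∈ M, ∑ i ∈ T, x i := by
          refine Finset.sum_le_sum fun T hT => h T (mem_filter.mp hT).1
      _ = ∑ i ∈ M.biUnion id, x i := (Finset.sum_biUnion hdisj).symm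
      _ = ∑ i ∈ S, x i := by rw [← hSeq]
  · rintro ⟨h, hN⟩
    refine ⟨fun S hS => ?_, hN⟩
    have := h S
    rwa [extGame_of_mem F v hS] at this
end

section
/- Let F be an arbitrary set system on N and v a game on F. For any nonnegative game v, core⁺(v) = core⁺(v̄), where v̄ is the extension of v to 2^N given by summing v over the maximal feasible subsets, provided F is weakly union-closed. -/
open Finset
open scoped Classical

/-- For a weakly union-closed system and a nonnegative game, the positive core of `v`
equals the positive core of its extension `v̄`. -/
theorem corePos_eq_corePos_extension
    {α : Type*} [Fintype α] [DecidableEq α] (F : Finset (Finset α))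
    (hempty : ∅ ∈ F) (huniv : Finset.univ ∈ F)
    (hwuc : ∀ A ∈ F, ∀ B ∈ F, (A ∩ B).Nonempty → A ∪ B ∈ F)
    (v : Finset α → ℝ) (hv0 : v ∅ = 0) (hvnn : ∀ S ∈ F, 0 ≤ v S) :
    {x : α → ℝ | (∀ i, 0 ≤ x i) ∧ (∀ S ∈ F, v S ≤ ∑ i ∈ S, x i) ∧
      ∑ i, x i = v Finset.univ} =
    {x : α → ℝ | (∀ i, 0 ≤ x i) ∧ (∀ S : Finset α, extGame F v S ≤ ∑ i ∈ S, x i) ∧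
      ∑ i, x i = extGame F v Finset.univ} := by
  have huext : extGame F v Finset.univ = v Finset.univ := extGame_of_mem F v huniv
  ext x
  simp only [Set.mem_setOf_eq]
  constructor
  · rintro ⟨hnn, hcore, hsum⟩
    refine ⟨hnn, ?_, by rw [huext]; exact hsum⟩
    intro S
    set P := F.filter (fun T => T ⊆ S ∧ ∀ U ∈ F, U ⊆ S → T ⊆ U → T = U) with hP
    have hmem : ∀ T ∈ P, T ∈ F ∧ T ⊆ S ∧ ∀ U ∈ F, U ⊆ S → T ⊆ U → T = U := by
      intro T hT
      simpa [hP, mem_filter] using hT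
    have hdisj : (P : Set (Finset α)).PairwiseDisjoint id := by
      intro T₁ h₁ T₂ h₂ hne
      obtain ⟨h₁F, h₁S, h₁max⟩ := hmem T₁ h₁
      obtain ⟨h₂F, h₂S, h₂max⟩ := hmem T₂ h₂
      by_contra hnd
      have hinter : (T₁ ∩ T₂).Nonempty := by
        rw [Finset.not_disjoint_iff_nonempty_inter] at hnd
        · exact hnd
      have hU : T₁ ∪ T₂ ∈ F := hwuc T₁ h₁F T₂ h₂F hinter
      have hUS : T₁ ∪ T₂ ⊆ S := Finset.union_subset h₁S h₂S
      have e₁ : T₁ = T₁ ∪ T₂ := h₁max _ hU hUS Finset.subset_union_left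
      have e₂ : T₂ = T₁ ∪ T₂ := h₂max _ hU hUS Finset.subset_union_right
      exact hne (e₁.trans e₂.symm)
    calc extGame F v S = ∑ T ∈ P, v T := rfl
      _ ≤ ∑ T ∈ P, ∑ i ∈ T, x i :=
          Finset.sum_le_sum (fun T hT => hcore T (hmem T hT).1)
      _ = ∑ i ∈ P.biUnion id, x i := (Finset.sum_biUnion hdisj).symm
      _ ≤ ∑ i ∈ S, x i := by
          apply Finset.sum_le_sum_of_subset_of_nonneg
          · intro i hi
            obtain ⟨T, hT, hiT⟩ := Finset.mem_biUnion.mp hi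
            exact (hmem T hT).2.1 hiT
          · intro i _ _
            exact hnn i
  · rintro ⟨hnn, hcore, hsum⟩
    refine ⟨hnn, ?_, by rw [← huext]; exact hsum⟩
    intro S hS
    have := hcore S
    rwa [extGame_of_mem F v hS] at this
end

section
/- Let F be weakly union-closed and v a game on F. Then the Möbius transform of the extension v̄ on 2^N vanishes outside F: m^{v̄}(S) = m^v(S) if S ∈ F, and m^{v̄}(S) = 0 otherwise. -/
open Finset
open scoped Classical

/-- The Möbius transform on `2^N`. -/
noncomputable def mobius {α : Type*} [Fintype α] [DecidableEq α]
    (w : Finset α → ℝ) (S : Finset α) : ℝ :=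
  ∑ T ∈ S.powerset, (-1 : ℝ) ^ ((S \ T).card) * w T

lemma real_sum_powerset_neg_one_pow_card {α : Type*} [DecidableEq α] {x : Finset α} :
    (∑ m ∈ x.powerset, (-1 : ℝ) ^ m.card) = if x = ∅ then 1 else 0 := by
  have h := @Finset.sum_powerset_neg_one_pow_card α _ x
  have h2 := congrArg (fun z : ℤ => (z : ℝ)) h
  push_cast at h2
  simpa [apply_ite (fun z : ℤ => (z : ℝ))] using h2

lemma inner_alt {α : Type*} [DecidableEq α] (S U : Finset α) (hU : U ⊆ S) :
    ∑ T ∈ S.powerset.filter (fun T => U ⊆ T), (-1 : ℝ) ^ ((S \ T).card)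
      = if U = S then 1 else 0 := by
  have key : ∑ T ∈ S.powerset.filter (fun T => U ⊆ T), (-1 : ℝ) ^ ((S \ T).card)
      = ∑ R ∈ (S \ U).powerset, (-1 : ℝ) ^ R.card := by
    refine Finset.sum_nbij' (fun T => S \ T) (fun R => S \ R) ?_ ?_ ?_ ?_ ?_
    · intro T hT
      simp only [Finset.mem_filter, Finset.mem_powerset] at hT ⊢
      exact Finset.sdiff_subset_sdiff le_rfl hT.2
    · intro R hR
      simp only [Finset.mem_filter, Finset.mem_powerset] at hR ⊢
      constructor
      · exact Finset.sdiff_subset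
      · intro a ha
        simp only [Finset.mem_sdiff]
        refine ⟨hU ha, fun haR => ?_⟩
        have := hR haR
        simp [Finset.mem_sdiff, ha] at this
    · intro T hT
      simp only [Finset.mem_filter, Finset.mem_powerset] at hT
      exact Finset.sdiff_sdiff_eq_self hT.1
    · intro R hR
      simp only [Finset.mem_powerset] at hR
      exact Finset.sdiff_sdiff_eq_self (hR.trans Finset.sdiff_subset)
    · intro T hT; rfl
  rw [key, real_sum_powerset_neg_one_pow_card]
  by_cases h : U = S
  · rw [if_pos h, if_pos (by rw [h]; exact Finset.sdiff_self S)]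
  · rw [if_neg h, if_neg]
    intro he
    exact h (Finset.Subset.antisymm hU (Finset.sdiff_eq_empty_iff_subset.mp he))

/-- Möbius inversion on the Boolean lattice. -/
lemma mobius_sum {α : Type*} [Fintype α] [DecidableEq α] (f : Finset α → ℝ) (S : Finset α) :
    mobius (fun X => ∑ T ∈ X.powerset, f T) S = f S := by
  unfold mobius
  have swap :
      ∑ T ∈ S.powerset, ∑ U ∈ T.powerset, (-1 : ℝ) ^ ((S \ T).card) * f U
        = ∑ U ∈ S.powerset, ∑ T ∈ S.powerset.filter (fun T => U ⊆ T),
            (-1 : ℝ) ^ ((S \ T).card) * f U := by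
    refine Finset.sum_comm' ?_
    intro T U
    simp only [Finset.mem_powerset, Finset.mem_filter]
    exact ⟨fun h => ⟨⟨h.1, h.2⟩, h.2.trans h.1⟩, fun h => ⟨h.1.1, h.1.2⟩⟩
  calc ∑ T ∈ S.powerset, (-1 : ℝ) ^ ((S \ T).card) * ∑ U ∈ T.powerset, f U
      = ∑ T ∈ S.powerset, ∑ U ∈ T.powerset, (-1 : ℝ) ^ ((S \ T).card) * f U := by
        simp [Finset.mul_sum]
    _ = ∑ U ∈ S.powerset, ∑ T ∈ S.powerset.filter (fun T => U ⊆ T),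
          (-1 : ℝ) ^ ((S \ T).card) * f U := swap
    _ = ∑ U ∈ S.powerset, (if U = S then 1 else 0) * f U := by
        refine Finset.sum_congr rfl fun U hU => ?_
        rw [← Finset.sum_mul, inner_alt S U (Finset.mem_powerset.mp hU)]
    _ = f S := by
        rw [Finset.sum_congr rfl (fun U _ => by rw [ite_mul, one_mul, zero_mul])]
        rw [Finset.sum_ite_eq' S.powerset S f]
        simp

/-- The Möbius transform of the extension `v̄` coincides with that of `v` on `F` and
vanishes outside `F`. -/
theorem mobius_extension_vanishes_outside
    {α : Type*} [Fintype α] [DecidableEq α] (F : Finset (Finset α))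
    (hempty : ∅ ∈ F) (huniv : Finset.univ ∈ F)
    (hwuc : ∀ A ∈ F, ∀ B ∈ F, (A ∩ B).Nonempty → A ∪ B ∈ F)
    (v : Finset α → ℝ) (hv0 : v ∅ = 0)
    (m : Finset α → ℝ)
    (hm : ∀ S ∈ F, v S = ∑ T ∈ F.filter (fun T => T ⊆ S), m T) :
    ∀ S : Finset α,
      (S ∈ F → mobius (extGame F v) S = m S) ∧
      (S ∉ F → mobius (extGame F v) S = 0) := by
  -- m ∅ = 0
  have hmzero : m ∅ = 0 := by
    have h := hm ∅ hempty
    have hf : F.filter (fun T => T ⊆ (∅ : Finset α)) = {∅} := by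
      ext T
      simp only [Finset.mem_filter, Finset.mem_singleton, Finset.subset_empty]
      constructor
      · rintro ⟨_, h⟩; exact h
      · rintro rfl; exact ⟨hempty, rfl⟩
    rw [hf] at h
    simpa [hv0] using h.symm
  -- maximal feasible subsets
  set maxF : Finset α → Finset (Finset α) :=
    fun S => F.filter (fun T => T ⊆ S ∧ ∀ U ∈ F, U ⊆ S → T ⊆ U → T = U) with hmaxF
  -- existence: every feasible subset of S is contained in some maximal one
  have hexists : ∀ S : Finset α, ∀ U ∈ F, U ⊆ S → ∃ T ∈ maxF S, U ⊆ T := by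
    intro S U hUF hUS
    set G := F.filter (fun T => U ⊆ T ∧ T ⊆ S) with hG
    have hGne : G.Nonempty := ⟨U, by simp [hG, hUF, hUS]⟩
    obtain ⟨T, hTG, hTmax⟩ := Finset.exists_max_image G (fun T => T.card) hGne
    simp only [hG, Finset.mem_filter] at hTG
    refine ⟨T, ?_, hTG.2.1⟩
    simp only [hmaxF, Finset.mem_filter]
    refine ⟨hTG.1, hTG.2.2, fun W hWF hWS hTW => ?_⟩
    have hWG : W ∈ G := by
      simp [hG, hWF, hWS, hTG.2.1.trans hTW]
    exact Finset.eq_of_subset_of_card_le hTW (hTmax W hWG)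
  -- uniqueness for nonempty U
  have huniq : ∀ S : Finset α, ∀ T₁ ∈ maxF S, ∀ T₂ ∈ maxF S,
      ∀ U : Finset α, U.Nonempty → U ⊆ T₁ → U ⊆ T₂ → T₁ = T₂ := by
    intro S T₁ hT₁ T₂ hT₂ U hUne hU1 hU2
    simp only [hmaxF, Finset.mem_filter] at hT₁ hT₂
    have hint : (T₁ ∩ T₂).Nonempty := by
      obtain ⟨a, ha⟩ := hUne
      exact ⟨a, Finset.mem_inter.mpr ⟨hU1 ha, hU2 ha⟩⟩
    have hun : T₁ ∪ T₂ ∈ F := hwuc T₁ hT₁.1 T₂ hT₂.1 hint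
    have hunS : T₁ ∪ T₂ ⊆ S := Finset.union_subset hT₁.2.1 hT₂.2.1
    have e1 : T₁ = T₁ ∪ T₂ := hT₁.2.2 _ hun hunS Finset.subset_union_left
    have e2 : T₂ = T₁ ∪ T₂ := hT₂.2.2 _ hun hunS Finset.subset_union_right
    exact e1.trans e2.symm
  -- key identity: extGame F v S = ∑ over feasible subsets of S of m
  have hkey : ∀ S : Finset α, extGame F v S = ∑ T ∈ F.filter (fun T => T ⊆ S), m T := by
    intro S
    unfold extGame
    -- rewrite each v T using hm
    have step1 : ∑ T ∈ maxF S, v T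
        = ∑ T ∈ maxF S, ∑ U ∈ F.filter (fun U => U ⊆ T ∧ U.Nonempty), m U := by
      refine Finset.sum_congr rfl fun T hT => ?_
      have hTF : T ∈ F := (Finset.mem_filter.mp hT).1
      rw [hm T hTF]
      refine (Finset.sum_subset ?_ ?_).symm
      · intro U hU
        simp only [Finset.mem_filter] at hU ⊢
        exact ⟨hU.1, hU.2.1⟩
      · intro U hU hU'
        simp only [Finset.mem_filter, not_and] at hU hU'
        have : U = ∅ := by
          by_contra hne
          exact (hU' hU.1 hU.2) (Finset.nonempty_iff_ne_empty.mpr hne)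
        rw [this, hmzero]
    rw [step1]
    -- biUnion
    have hdisj : (maxF S : Set (Finset α)).PairwiseDisjoint
        (fun T => F.filter (fun U => U ⊆ T ∧ U.Nonempty)) := by
      intro T₁ hT₁ T₂ hT₂ hne
      refine Finset.disjoint_left.mpr fun U hU1 hU2 => ?_
      simp only [Finset.mem_filter] at hU1 hU2
      exact hne (huniq S T₁ hT₁ T₂ hT₂ U hU1.2.2 hU1.2.1 hU2.2.1)
    have hbi : (maxF S).biUnion (fun T => F.filter (fun U => U ⊆ T ∧ U.Nonempty))
        = F.filter (fun U => U ⊆ S ∧ U.Nonempty) := by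
      ext U
      simp only [Finset.mem_biUnion, Finset.mem_filter]
      constructor
      · rintro ⟨T, hT, hUF, hUT, hUne⟩
        have hTS : T ⊆ S := (Finset.mem_filter.mp hT).2.1
        exact ⟨hUF, hUT.trans hTS, hUne⟩
      · rintro ⟨hUF, hUS, hUne⟩
        obtain ⟨T, hT, hUT⟩ := hexists S U hUF hUS
        exact ⟨T, hT, hUF, hUT, hUne⟩
    rw [← Finset.sum_biUnion hdisj, hbi]
    -- add back the empty set
    refine Finset.sum_subset ?_ ?_
    · intro U hU
      simp only [Finset.mem_filter] at hU ⊢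
      exact ⟨hU.1, hU.2.1⟩
    · intro U hU hU'
      simp only [Finset.mem_filter, not_and] at hU hU'
      have : U = ∅ := by
        by_contra hne
        exact (hU' hU.1 hU.2) (Finset.nonempty_iff_ne_empty.mpr hne)
      rw [this, hmzero]
  -- now use Möbius inversion
  have hfun : ∀ X : Finset α, extGame F v X
      = ∑ T ∈ X.powerset, (if T ∈ F then m T else 0) := by
    intro X
    rw [hkey X, ← Finset.sum_filter]
    congr 1
    ext T
    simp only [Finset.mem_filter, Finset.mem_powerset]
    tauto
  intro S
  have : mobius (extGame F v) S = (if S ∈ F then m S else 0) := by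
    have : mobius (extGame F v) S
        = mobius (fun X => ∑ T ∈ X.powerset, (if T ∈ F then m T else 0)) S := by
      unfold mobius
      refine Finset.sum_congr rfl fun T _ => ?_
      rw [hfun T]
    rw [this, mobius_sum]
  constructor
  · intro hS; rw [this, if_pos hS]
  · intro hS; rw [this, if_neg hS]
end

section
/- Let v be a game on 2^N. If v is convex (supermodular), then every marginal worth vector φ^σ, σ a permutation of N, belongs to core(v). Conversely, if all marginal worth vectors belong to core(v), then v is convex. -/
open Finset

/-- The marginal worth vector of a game `v` on `2^N` associated with a permutation. -/
noncomputable def marginalVector {n : ℕ} (v : Finset (Fin n) → ℝ)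
    (σ : Equiv.Perm (Fin n)) : Fin n → ℝ :=
  fun p =>
    v (Finset.univ.filter fun q => σ.symm q ≤ σ.symm p) -
      v (Finset.univ.filter fun q => σ.symm q < σ.symm p)

/-- Sum of the marginal vector over a `σ`-downward-closed set equals its worth. -/
lemma prefix_sum {n : ℕ} (v : Finset (Fin n) → ℝ) (hv0 : v ∅ = 0)
    (σ : Equiv.Perm (Fin n)) :
    ∀ P : Finset (Fin n), (∀ p ∈ P, ∀ q, σ.symm q ≤ σ.symm p → q ∈ P) →
      ∑ i ∈ P, marginalVector v σ i = v P := by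
  intro P
  induction P using Finset.strongInduction with
  | _ P ih =>
    intro hdc
    rcases P.eq_empty_or_nonempty with rfl | hne
    · simp [hv0]
    · obtain ⟨p, hp, hmax⟩ := Finset.exists_max_image P (fun q => σ.symm q) hne
      have hPeq : P = univ.filter fun q => σ.symm q ≤ σ.symm p := by
        ext q; simp only [mem_filter, mem_univ, true_and]
        exact ⟨fun hq => hmax q hq, fun h => hdc p hp q h⟩
      have herase : P.erase p = univ.filter fun q => σ.symm q < σ.symm p := by
        ext q
        simp only [mem_erase, mem_filter, mem_univ, true_and]
        constructor
        · rintro ⟨hne', hq⟩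
          exact lt_of_le_of_ne (hmax q hq) fun h => hne' (σ.symm.injective h)
        · intro h
          exact ⟨fun he => absurd h (by simp [he]), hdc p hp q h.le⟩
      have hdce : ∀ a ∈ P.erase p, ∀ q, σ.symm q ≤ σ.symm a → q ∈ P.erase p := by
        intro a ha q hq
        rw [herase] at ha ⊢
        simp only [mem_filter, mem_univ, true_and] at ha ⊢
        exact lt_of_le_of_lt hq ha
      have hrec := ih (P.erase p) (Finset.erase_ssubset hp) hdce
      rw [← Finset.add_sum_erase _ _ hp, hrec, herase]
      have hmv : marginalVector v σ p
          = v P - v (univ.filter fun q => σ.symm q < σ.symm p) := by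
        rw [hPeq]; rfl
      rw [hmv]; ring

/-- If `v` is convex, every marginal vector dominates `v` coalitionwise. -/
lemma convex_marginal_core {n : ℕ} (v : Finset (Fin n) → ℝ) (hv0 : v ∅ = 0)
    (hc : ∀ S T : Finset (Fin n), v S + v T ≤ v (S ∪ T) + v (S ∩ T))
    (σ : Equiv.Perm (Fin n)) :
    ∀ S : Finset (Fin n), v S ≤ ∑ i ∈ S, marginalVector v σ i := by
  intro S
  induction S using Finset.strongInduction with
  | _ S ih =>
    rcases S.eq_empty_or_nonempty with rfl | hne
    · simp [hv0]
    · obtain ⟨p, hp, hmax⟩ := Finset.exists_max_image S (fun q => σ.symm q) hne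
      set A : Finset (Fin n) := univ.filter fun q => σ.symm q < σ.symm p with hA
      have hU : A ∪ S = univ.filter fun q => σ.symm q ≤ σ.symm p := by
        ext q
        simp only [hA, mem_union, mem_filter, mem_univ, true_and]
        constructor
        · rintro (h | h)
          · exact h.le
          · exact hmax q h
        · intro h
          rcases eq_or_lt_of_le h with he | hl
          · right; rwa [σ.symm.injective he]
          · left; exact hl
      have hI : A ∩ S = S.erase p := by
        ext q
        simp only [hA, mem_inter, mem_filter, mem_univ, true_and, mem_erase]
        constructor
        · rintro ⟨hlt, hq⟩
          exact ⟨fun he => absurd hlt (by simp [he]), hq⟩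
        · rintro ⟨hne', hq⟩
          exact ⟨lt_of_le_of_ne (hmax q hq) fun h => hne' (σ.symm.injective h), hq⟩
      have h1 := hc A S
      rw [hU, hI] at h1
      have h2 := ih (S.erase p) (Finset.erase_ssubset hp)
      rw [← Finset.add_sum_erase _ _ hp]
      have hmv : marginalVector v σ p
          = v (univ.filter fun q => σ.symm q ≤ σ.symm p) - v A := rfl
      linarith

/-- A game on `2^N` is convex iff all marginal worth vectors belong to its core. -/
theorem convex_iff_marginalVectors_mem_core
    {n : ℕ} (v : Finset (Fin n) → ℝ) (hv0 : v ∅ = 0) :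
    (∀ S T : Finset (Fin n), v S + v T ≤ v (S ∪ T) + v (S ∩ T)) ↔
    (∀ σ : Equiv.Perm (Fin n),
      (∀ S : Finset (Fin n), v S ≤ ∑ i ∈ S, marginalVector v σ i) ∧
      ∑ i, marginalVector v σ i = v Finset.univ) := by
  constructor
  · intro hc σ
    exact ⟨convex_marginal_core v hv0 hc σ,
      prefix_sum v hv0 σ univ (fun _ _ q _ => mem_univ q)⟩
  · intro H S T
    classical
    set g : Fin n → ℕ := fun q =>
      if q ∈ S then (if q ∈ T then 0 else 1) else (if q ∈ T then 2 else 3) with hg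
    set σ : Equiv.Perm (Fin n) := Tuple.sort g with hσ
    have hmono : ∀ q p : Fin n, σ.symm q ≤ σ.symm p → g q ≤ g p := by
      intro q p h
      have := Tuple.monotone_sort g h
      simpa [hσ, Function.comp] using this
    have hgST : ∀ q, g q = 0 ↔ q ∈ S ∩ T := by
      intro q; simp only [hg, mem_inter]; split_ifs <;> simp_all
    have hgS : ∀ q, g q ≤ 1 ↔ q ∈ S := by
      intro q; simp only [hg]; split_ifs <;> simp_all
    have hgSuT : ∀ q, g q ≤ 2 ↔ q ∈ S ∪ T := by
      intro q; simp only [hg, mem_union]; split_ifs <;> simp_all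
    have hST : ∑ i ∈ S ∩ T, marginalVector v σ i = v (S ∩ T) := by
      refine prefix_sum v hv0 σ _ fun p hp q hq => ?_
      rw [← hgST] at hp ⊢
      have := hmono q p hq
      omega
    have hS : ∑ i ∈ S, marginalVector v σ i = v S := by
      refine prefix_sum v hv0 σ _ fun p hp q hq => ?_
      rw [← hgS] at hp ⊢
      exact le_trans (hmono q p hq) hp
    have hSuT : ∑ i ∈ S ∪ T, marginalVector v σ i = v (S ∪ T) := by
      refine prefix_sum v hv0 σ _ fun p hp q hq => ?_
      rw [← hgSuT] at hp ⊢
      exact le_trans (hmono q p hq) hp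
    have hT : v T ≤ ∑ i ∈ T, marginalVector v σ i := (H σ).1 T
    have hie := Finset.sum_union_inter (s₁ := S) (s₂ := T) (f := marginalVector v σ)
    linarith
end

section
/- Let F be a partition system on N (containing ∅ and all singletons, weakly union-closed) with N ∈ F, and let v′ be a game on F. The partitioning game v on 2^N defined by v(S) = max over F-partitions {F_i} of S of Σ_i v′(F_i) is superadditive, and core(v) = core(v′). -/
open Finset

/-- `P` is a partition of `S` into nonempty blocks belonging to `F`. -/
def IsFPartition {α : Type*} [DecidableEq α] (F : Finset (Finset α))
    (P : Finset (Finset α)) (S : Finset α) : Prop :=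
  (∀ B ∈ P, B ∈ F ∧ B ≠ ∅) ∧ (P : Set (Finset α)).PairwiseDisjoint id ∧
    P.biUnion id = S

/-- The partitioning game generated by `v'` on a partition system is superadditive
and has the same core as `v'`. -/
theorem partitioningGame_superadditive_and_core
    {α : Type*} [Fintype α] [DecidableEq α] (F : Finset (Finset α))
    (hempty : ∅ ∈ F) (huniv : Finset.univ ∈ F)
    (hsing : ∀ i : α, {i} ∈ F)
    (hwuc : ∀ A ∈ F, ∀ B ∈ F, (A ∩ B).Nonempty → A ∪ B ∈ F)
    (v' : Finset α → ℝ) (hv'0 : v' ∅ = 0)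
    (v : Finset α → ℝ)
    (hub : ∀ S : Finset α, ∀ P : Finset (Finset α),
      IsFPartition F P S → ∑ B ∈ P, v' B ≤ v S)
    (hach : ∀ S : Finset α, ∃ P : Finset (Finset α),
      IsFPartition F P S ∧ v S = ∑ B ∈ P, v' B)
    (hvN : v Finset.univ = v' Finset.univ) :
    (∀ S T : Finset α, Disjoint S T → v S + v T ≤ v (S ∪ T)) ∧
    {x : α → ℝ | (∀ S : Finset α, v S ≤ ∑ i ∈ S, x i) ∧ ∑ i, x i = v Finset.univ} =
    {x : α → ℝ | (∀ S ∈ F, v' S ≤ ∑ i ∈ S, x i) ∧ ∑ i, x i = v' Finset.univ} := by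
  constructor
  · -- superadditivity
    intro S T hST
    obtain ⟨P, ⟨hPF, hPd, hPu⟩, hPv⟩ := hach S
    obtain ⟨Q, ⟨hQF, hQd, hQu⟩, hQv⟩ := hach T
    have hBsub : ∀ B ∈ P, B ⊆ S := by
      intro B hB
      rw [← hPu]; exact subset_biUnion_of_mem id hB
    have hCsub : ∀ C ∈ Q, C ⊆ T := by
      intro C hC
      rw [← hQu]; exact subset_biUnion_of_mem id hC
    have hPQ : Disjoint P Q := by
      rw [Finset.disjoint_left]
      intro B hBP hBQ
      obtain ⟨b, hb⟩ := Finset.nonempty_of_ne_empty (hPF B hBP).2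
      exact (Finset.disjoint_left.mp hST (hBsub B hBP hb)) (hCsub B hBQ hb)
    have hpart : IsFPartition F (P ∪ Q) (S ∪ T) := by
      refine ⟨?_, ?_, ?_⟩
      · intro B hB
        rcases Finset.mem_union.mp hB with h | h
        exacts [hPF B h, hQF B h]
      · intro B hB C hC hne
        simp only [Finset.coe_union, Set.mem_union, Finset.mem_coe] at hB hC
        rcases hB with hB | hB <;> rcases hC with hC | hC
        · exact hPd hB hC hne
        · exact Finset.disjoint_coe.mp <| Finset.disjoint_coe.mpr <|
            (hST.mono (hBsub B hB) (hCsub C hC))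
        · exact (hST.symm.mono (hCsub B hB) (hBsub C hC))
        · exact hQd hB hC hne
      · ext a
        simp only [← hPu, ← hQu, Finset.mem_biUnion, Finset.mem_union]
        aesop
    have := hub (S ∪ T) (P ∪ Q) hpart
    rw [Finset.sum_union hPQ] at this
    rw [hPv, hQv]; exact this
  · -- core equality
    ext x
    simp only [Set.mem_setOf_eq]
    constructor
    · rintro ⟨hcore, htot⟩
      refine ⟨?_, by rw [htot, hvN]⟩
      intro S hS
      rcases eq_or_ne S ∅ with rfl | hne
      · simp [hv'0]
      · have hpart : IsFPartition F {S} S := by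
          refine ⟨?_, ?_, ?_⟩
          · intro B hB; rw [Finset.mem_singleton] at hB; subst hB; exact ⟨hS, hne⟩
          · simp [Set.PairwiseDisjoint]
          · simp
        have := hub S {S} hpart
        rw [Finset.sum_singleton] at this
        exact this.trans (hcore S)
    · rintro ⟨hcore, htot⟩
      refine ⟨?_, by rw [htot, hvN]⟩
      intro S
      obtain ⟨P, ⟨hPF, hPd, hPu⟩, hPv⟩ := hach S
      calc v S = ∑ B ∈ P, v' B := hPv
        _ ≤ ∑ B ∈ P, ∑ i ∈ B, x i :=
            Finset.sum_le_sum (fun B hB => hcore B (hPF B hB).1)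
        _ = ∑ i ∈ S, x i := by
            rw [← hPu, Finset.sum_biUnion hPd]; rfl
end
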